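/- Let (S,∘) be a bijective RC-quasigroup, M its structure monoid and G its structure group. Then M is cancellative (left- and right-), any two elements of M admit a common right-multiple and a common left-multiple, the canonical homomorphism M → G is injective, every element of G can be written f⁻¹g and also g′f′⁻¹ with f,g,f′,g′ in the image of M, and the group G is torsion-free. -/

import Mathlib

/-- The right-cyclic law: `(x∘y)∘(x∘z) = (y∘x)∘(y∘z)`. -/
def RCLaw {S : Type*} (op : S → S → S) : Prop :=
  ∀ x y z : S, op (op x y) (op x z) = op (op y x) (op y z)

/-- The defining relations `s(s∘t) = t(t∘s)`, `s ≠ t`, of the structure monoid, as a relation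
on the free monoid over `S`. -/
def rcRel {S : Type*} (op : S → S → S) : FreeMonoid S → FreeMonoid S → Prop :=
  fun a b => ∃ s t : S, s ≠ t ∧
    a = FreeMonoid.of s * FreeMonoid.of (op s t) ∧ b = FreeMonoid.of t * FreeMonoid.of (op t s)

/-- The structure monoid of `(S,∘)`: the monoid presented by generators `S` and relations
`s(s∘t) = t(t∘s)` for `s ≠ t`, realized as the quotient of the free monoid on `S` by the
congruence generated by these relations. -/
abbrev StructureMonoid {S : Type*} (op : S → S → S) := (conGen (rcRel op)).Quotient

/-- The canonical generator of the structure monoid associated with `s ∈ S`. -/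
def smGen {S : Type*} (op : S → S → S) (s : S) : StructureMonoid op :=
  (conGen (rcRel op)).mk' (FreeMonoid.of s)

/-- The defining relators `s(s∘t)(t(t∘s))⁻¹`, `s ≠ t`, of the structure group, as a set of
elements of the free group over `S`. -/
def rcRelsG {S : Type*} (op : S → S → S) : Set (FreeGroup S) :=
  { r | ∃ s t : S, s ≠ t ∧
      r = FreeGroup.of s * FreeGroup.of (op s t) * (FreeGroup.of t * FreeGroup.of (op t s))⁻¹ }

/-- The structure group of `(S,∘)`: the group presented by generators `S` and relations
`s(s∘t) = t(t∘s)` for `s ≠ t`. -/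
abbrev StructureGroup {S : Type*} (op : S → S → S) := PresentedGroup (rcRelsG op)

namespace Stmt8

open Finsupp FreeMonoid

variable {S : Type*}

/-- Auxiliary group: pairs of an integer vector and a permutation, with a twisted product. -/
structure K (S : Type*) where
  vec : S →₀ ℤ
  perm : Equiv.Perm S

namespace K

theorem ext' {a b : K S} (h1 : a.vec = b.vec) (h2 : a.perm = b.perm) : a = b := by
  cases a; cases b; cases h1; cases h2; rfl

noncomputable instance : Mul (K S) :=
  ⟨fun a b => ⟨a.vec + equivMapDomain a.perm.symm b.vec, b.perm * a.perm⟩⟩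
instance : One (K S) := ⟨⟨0, 1⟩⟩
noncomputable instance : Inv (K S) := ⟨fun a => ⟨-(equivMapDomain a.perm a.vec), a.perm⁻¹⟩⟩

@[simp] theorem mul_vec (a b : K S) :
    (a * b).vec = a.vec + equivMapDomain a.perm.symm b.vec := rfl
@[simp] theorem mul_perm (a b : K S) : (a * b).perm = b.perm * a.perm := rfl
@[simp] theorem one_vec : (1 : K S).vec = 0 := rfl
@[simp] theorem one_perm : (1 : K S).perm = 1 := rfl
@[simp] theorem inv_vec (a : K S) : (a⁻¹).vec = -(equivMapDomain a.perm a.vec) := rfl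
@[simp] theorem inv_perm (a : K S) : (a⁻¹).perm = a.perm⁻¹ := rfl

noncomputable instance : Group (K S) where
  mul_assoc a b c := by
    refine ext' ?_ ?_
    · ext x
      simp [equivMapDomain_apply, add_assoc]
    · simp [mul_assoc]
  one_mul a := by
    refine ext' ?_ ?_
    · ext x; simp [equivMapDomain_apply, Equiv.Perm.inv_def]
    · simp
  mul_one a := by
    refine ext' ?_ ?_
    · ext x; simp [equivMapDomain_apply, Equiv.Perm.inv_def]
    · simp
  inv_mul_cancel a := by
    refine ext' ?_ ?_
    · ext x
      simp [equivMapDomain_apply, Equiv.Perm.inv_def]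
    · simp

end K

section Defs

variable (op : S → S → S) (hlb : ∀ s : S, Function.Bijective (op s))

/-- The left translation as a permutation. -/
noncomputable def sg (s : S) : Equiv.Perm S := Equiv.ofBijective (op s) (hlb s)

@[simp] theorem sg_apply (s t : S) : sg op hlb s t = op s t := rfl

/-- The basic element of `K` associated to a generator. -/
noncomputable def kg (s : S) : K S := ⟨single s 1, sg op hlb s⟩

/-- The evaluation homomorphism on the free monoid. -/
noncomputable def psi0 : FreeMonoid S →* K S := FreeMonoid.lift (kg op hlb)

@[simp] theorem psi0_of (s : S) : psi0 op hlb (of s) = kg op hlb s := rfl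

theorem kg_rel (hRC : RCLaw op) (s t : S) :
    kg op hlb s * kg op hlb (op s t) = kg op hlb t * kg op hlb (op t s) := by
  refine K.ext' ?_ ?_
  · show single s 1 + equivMapDomain (sg op hlb s).symm (single (op s t) 1)
      = single t 1 + equivMapDomain (sg op hlb t).symm (single (op t s) 1)
    rw [equivMapDomain_single, equivMapDomain_single]
    have h1 : (sg op hlb s).symm (op s t) = t := (sg op hlb s).symm_apply_apply t
    have h2 : (sg op hlb t).symm (op t s) = s := (sg op hlb t).symm_apply_apply s
    rw [h1, h2, add_comm]
  · show sg op hlb (op s t) * sg op hlb s = sg op hlb (op t s) * sg op hlb t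
    ext x
    exact hRC s t x

theorem hker (hRC : RCLaw op) : conGen (rcRel op) ≤ Con.ker (psi0 op hlb) := by
  refine Con.conGen_le.mpr ?_
  rintro a b ⟨s, t, hst, rfl, rfl⟩
  show psi0 op hlb _ = psi0 op hlb _
  rw [map_mul, map_mul, psi0_of, psi0_of, psi0_of, psi0_of]
  exact kg_rel op hlb hRC s t

/-- The abelianized weight of a word. -/
noncomputable def nu0 (w : FreeMonoid S) : S →₀ ℤ := (psi0 op hlb w).vec

@[simp] theorem nu0_nil : nu0 op hlb 1 = 0 := by
  rw [nu0, map_one]; rfl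

theorem nu0_nil' : nu0 op hlb (ofList []) = 0 := nu0_nil op hlb

theorem psi0_cons (s : S) (l : List S) :
    psi0 op hlb (ofList (s :: l)) = kg op hlb s * psi0 op hlb (ofList l) := by
  rw [ofList_cons, map_mul, psi0_of]

theorem nu0_cons (s : S) (l : List S) :
    nu0 op hlb (ofList (s :: l))
      = single s 1 + equivMapDomain (sg op hlb s).symm (nu0 op hlb (ofList l)) := by
  rw [nu0, psi0_cons]; rfl

theorem nu0_cons_apply (s : S) (l : List S) (x : S) :
    nu0 op hlb (ofList (s :: l)) x
      = (single s 1 : S →₀ ℤ) x + nu0 op hlb (ofList l) (op s x) := by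
  rw [nu0_cons, Finsupp.add_apply, equivMapDomain_apply, Equiv.symm_symm, sg_apply]

theorem nu0_nonneg (l : List S) : ∀ x, 0 ≤ nu0 op hlb (ofList l) x := by
  induction l with
  | nil => intro x; rw [show ofList ([] : List S) = 1 from rfl, nu0_nil]; simp
  | cons s l ih =>
    intro x
    rw [nu0_cons_apply]
    have h1 : (0 : ℤ) ≤ (single s 1 : S →₀ ℤ) x := by
      rcases eq_or_ne s x with h | h
      · subst h; simp
      · rw [single_eq_of_ne' h]
    exact add_nonneg h1 (ih (op s x))

theorem nu0_head_pos (t : S) (l : List S) : 0 < nu0 op hlb (ofList (t :: l)) t := by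
  rw [nu0_cons_apply, single_eq_same]
  have := nu0_nonneg op hlb l (op t t)
  omega

theorem nu0_eq_zero {l : List S} (h : nu0 op hlb (ofList l) = 0) : l = [] := by
  cases l with
  | nil => rfl
  | cons t l =>
    exfalso
    have := nu0_head_pos op hlb t l
    rw [h] at this
    simp at this

theorem equivMapDomain_cancel (e : Equiv.Perm S) (v : S →₀ ℤ) :
    equivMapDomain e (equivMapDomain e.symm v) = v := by
  rw [← equivMapDomain_trans, Equiv.symm_trans_self, equivMapDomain_refl]

theorem equivMapDomain_cancel' (e : Equiv.Perm S) (v : S →₀ ℤ) :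
    equivMapDomain e.symm (equivMapDomain e v) = v := by
  rw [← equivMapDomain_trans, Equiv.self_trans_symm, equivMapDomain_refl]

/-- Lemma B: a positive coefficient can be pulled to the head of a word. -/
theorem lemB (hRC : RCLaw op) :
    ∀ l : List S, ∀ t : S, 0 < nu0 op hlb (ofList l) t →
      ∃ l', conGen (rcRel op) (ofList l) (of t * ofList l') := by
  intro l
  induction l with
  | nil => intro t h; rw [nu0_nil'] at h; simp at h
  | cons s l ih =>
    intro t h
    by_cases hst : s = t
    · subst hst
      exact ⟨l, by rw [← ofList_cons]; exact (conGen (rcRel op)).refl _⟩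
    · have h' : 0 < nu0 op hlb (ofList l) (op s t) := by
        rw [nu0_cons_apply, single_eq_of_ne' hst] at h
        omega
      obtain ⟨l', hl'⟩ := ih (op s t) h'
      refine ⟨op t s :: l', ?_⟩
      have h1 : conGen (rcRel op) (ofList (s :: l)) (of s * (of (op s t) * ofList l')) := by
        rw [ofList_cons]
        exact (conGen (rcRel op)).mul ((conGen (rcRel op)).refl _) hl'
      have h2 : conGen (rcRel op) (of s * of (op s t)) (of t * of (op t s)) :=
        ConGen.Rel.of _ _ ⟨s, t, hst, rfl, rfl⟩
      have h3 : conGen (rcRel op) (of s * of (op s t) * ofList l')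
          (of t * of (op t s) * ofList l') :=
        (conGen (rcRel op)).mul h2 ((conGen (rcRel op)).refl _)
      rw [mul_assoc] at h3
      refine (h1.trans h3).trans ?_
      rw [ofList_cons, ← mul_assoc]
      exact (conGen (rcRel op)).refl _

/-- Lemma A: words with the same weight are congruent. -/
theorem lemA (hRC : RCLaw op) :
    ∀ n : ℕ, ∀ l₁ l₂ : List S, l₁.length ≤ n →
      nu0 op hlb (ofList l₁) = nu0 op hlb (ofList l₂) →
      conGen (rcRel op) (ofList l₁) (ofList l₂) := by
  intro n
  induction n with
  | zero =>
    intro l₁ l₂ hlen h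
    have h1 : l₁ = [] := List.length_eq_zero_iff.mp (Nat.le_zero.mp hlen)
    subst h1
    rw [nu0_nil'] at h
    rw [nu0_eq_zero op hlb h.symm]
    exact (conGen (rcRel op)).refl _
  | succ n ih =>
    intro l₁ l₂ hlen h
    cases l₁ with
    | nil =>
      rw [nu0_nil'] at h
      rw [nu0_eq_zero op hlb h.symm]
      exact (conGen (rcRel op)).refl _
    | cons s u =>
      have hpos : 0 < nu0 op hlb (ofList l₂) s := by
        rw [← h]
        exact nu0_head_pos op hlb s u
      obtain ⟨w, hw⟩ := lemB op hlb hRC l₂ s hpos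
      have hps : nu0 op hlb (ofList l₂) = nu0 op hlb (ofList (s :: w)) := by
        have := hker op hlb hRC hw
        rw [nu0, nu0, this, ofList_cons]
      rw [hps, nu0_cons, nu0_cons] at h
      have h4 : nu0 op hlb (ofList u) = nu0 op hlb (ofList w) := by
        have h5 := add_left_cancel h
        have h6 := congrArg (equivMapDomain (sg op hlb s)) h5
        rwa [equivMapDomain_cancel, equivMapDomain_cancel] at h6
      have hlen' : u.length ≤ n := by
        simpa using Nat.lt_succ_iff.mp (Nat.lt_of_lt_of_le (by simp) hlen)
      have hc : conGen (rcRel op) (ofList u) (ofList w) := ih u w hlen' h4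
      have : conGen (rcRel op) (ofList (s :: u)) (ofList (s :: w)) := by
        rw [ofList_cons, ofList_cons]
        exact (conGen (rcRel op)).mul ((conGen (rcRel op)).refl _) hc
      exact this.trans ((conGen (rcRel op)).symm hw)

end Defs

section MonoidLevel

variable (op : S → S → S) (hlb : ∀ s : S, Function.Bijective (op s)) (hRC : RCLaw op)

/-- The evaluation homomorphism on the structure monoid. -/
noncomputable def psiM : StructureMonoid op →* K S :=
  (conGen (rcRel op)).lift (psi0 op hlb) (hker op hlb hRC)

/-- The weight of an element of the structure monoid. -/
noncomputable def nuM (m : StructureMonoid op) : S →₀ ℤ := (psiM op hlb hRC m).vec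

theorem psiM_mk (w : FreeMonoid S) :
    psiM op hlb hRC ((conGen (rcRel op)).mk' w) = psi0 op hlb w :=
  Con.lift_mk' _ _

theorem nuM_mk (w : FreeMonoid S) :
    nuM op hlb hRC ((conGen (rcRel op)).mk' w) = nu0 op hlb w := by
  rw [nuM, psiM_mk]; rfl

theorem exists_rep (m : StructureMonoid op) :
    ∃ l : List S, m = (conGen (rcRel op)).mk' (ofList l) := by
  refine Con.induction_on m fun w => ⟨toList w, ?_⟩
  rw [ofList_toList]
  rfl

theorem nuM_inj {a b : StructureMonoid op} (h : nuM op hlb hRC a = nuM op hlb hRC b) :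
    a = b := by
  obtain ⟨la, rfl⟩ := exists_rep op a
  obtain ⟨lb, rfl⟩ := exists_rep op b
  rw [nuM_mk, nuM_mk] at h
  have := lemA op hlb hRC la.length la lb le_rfl h
  exact (Con.eq _).mpr this

theorem nuM_mul (a b : StructureMonoid op) :
    nuM op hlb hRC (a * b)
      = nuM op hlb hRC a
        + equivMapDomain (psiM op hlb hRC a).perm.symm (nuM op hlb hRC b) := by
  rw [nuM, map_mul]; rfl

theorem nuM_nonneg (m : StructureMonoid op) : ∀ x, 0 ≤ nuM op hlb hRC m x := by
  obtain ⟨l, rfl⟩ := exists_rep op m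
  rw [nuM_mk]
  exact nu0_nonneg op hlb l

theorem nuM_one : nuM op hlb hRC 1 = 0 := by
  rw [nuM, map_one]; rfl

/-- The mass (total degree) of a weight. -/
noncomputable def mass (a : S →₀ ℤ) : ℤ := a.sum fun _ n => n

theorem mass_nonneg {a : S →₀ ℤ} (ha : ∀ x, 0 ≤ a x) : 0 ≤ mass a :=
  Finset.sum_nonneg fun x _ => ha x

theorem le_mass {a : S →₀ ℤ} (ha : ∀ x, 0 ≤ a x) (x : S) : a x ≤ mass a := by
  by_cases hx : x ∈ a.support
  · exact Finset.single_le_sum (fun i _ => ha i) hx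
  · have : a x = 0 := Finsupp.notMem_support_iff.mp hx
    rw [this]
    exact mass_nonneg ha

theorem mass_equivMapDomain (e : Equiv.Perm S) (a : S →₀ ℤ) :
    mass (equivMapDomain e a) = mass a := by
  rw [mass, mass, Finsupp.sum_equivMapDomain]

theorem nu0_surj_aux : ∀ n : ℕ, ∀ a : S →₀ ℤ, (∀ x, 0 ≤ a x) → mass a ≤ (n : ℤ) →
    ∃ l : List S, nu0 op hlb (ofList l) = a := by
  intro n
  induction n with
  | zero =>
    intro a ha hm
    refine ⟨[], ?_⟩
    rw [nu0_nil']
    ext x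
    have h1 := le_mass ha x
    have h2 := ha x
    simp only [Finsupp.coe_zero, Pi.zero_apply]
    omega
  | succ n ih =>
    intro a ha hm
    by_cases h0 : a = 0
    · exact ⟨[], by rw [nu0_nil', h0]⟩
    · obtain ⟨s, hs⟩ := Finsupp.support_nonempty_iff.mpr h0
      have hspos : 0 < a s := lt_of_le_of_ne (ha s) (Ne.symm (Finsupp.mem_support_iff.mp hs))
      set b := equivMapDomain (sg op hlb s) (a - single s 1) with hb
      have hbnn : ∀ x, 0 ≤ b x := by
        intro x
        rw [hb, equivMapDomain_apply, Finsupp.sub_apply]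
        rcases eq_or_ne ((sg op hlb s).symm x) s with h | h
        · rw [h, single_eq_same]; omega
        · rw [single_eq_of_ne' (Ne.symm h), sub_zero]
          exact ha _
      have hmb : mass b = mass a - 1 := by
        rw [hb, mass_equivMapDomain, mass, Finsupp.sum_sub_index (fun _ _ _ => rfl)]
        have : (single s (1 : ℤ)).sum (fun _ n => n) = 1 := Finsupp.sum_single_index rfl
        rw [this]
        rfl
      have hmb' : mass b ≤ (n : ℤ) := by
        push_cast at hm ⊢
        omega
      obtain ⟨l, hl⟩ := ih b hbnn hmb'
      refine ⟨s :: l, ?_⟩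
      rw [nu0_cons, hl, hb, equivMapDomain_cancel']
      abel

theorem nuM_surj (a : S →₀ ℤ) (ha : ∀ x, 0 ≤ a x) :
    ∃ m : StructureMonoid op, nuM op hlb hRC m = a := by
  obtain ⟨l, hl⟩ := nu0_surj_aux op hlb (mass a).toNat a ha (by
    have := mass_nonneg ha
    omega)
  exact ⟨(conGen (rcRel op)).mk' (ofList l), by rw [nuM_mk, hl]⟩

theorem dvd_iff_le (f h : StructureMonoid op) :
    f ∣ h ↔ nuM op hlb hRC f ≤ nuM op hlb hRC h := by
  constructor
  · rintro ⟨u, rfl⟩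
    rw [nuM_mul, Finsupp.le_def]
    intro x
    have h1 : 0 ≤ equivMapDomain (psiM op hlb hRC f).perm.symm (nuM op hlb hRC u) x := by
      rw [equivMapDomain_apply]
      exact nuM_nonneg op hlb hRC u _
    simp only [Finsupp.add_apply]
    omega
  · intro hle
    set d := equivMapDomain (psiM op hlb hRC f).perm
        (nuM op hlb hRC h - nuM op hlb hRC f) with hd
    have hdnn : ∀ x, 0 ≤ d x := by
      intro x
      rw [hd, equivMapDomain_apply, Finsupp.sub_apply]
      have := Finsupp.le_def.mp hle ((psiM op hlb hRC f).perm.symm x)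
      omega
    obtain ⟨u, hu⟩ := nuM_surj op hlb hRC d hdnn
    refine ⟨u, ?_⟩
    refine (nuM_inj op hlb hRC ?_).symm
    rw [nuM_mul, hu, hd, equivMapDomain_cancel']
    abel

include hlb hRC in
theorem left_cancel (a b c : StructureMonoid op) (h : a * b = a * c) : b = c := by
  have h1 : psiM op hlb hRC a * psiM op hlb hRC b = psiM op hlb hRC a * psiM op hlb hRC c := by
    rw [← map_mul, ← map_mul, h]
  have h2 := mul_left_cancel h1
  exact nuM_inj op hlb hRC (by rw [nuM, nuM, h2])

include hlb hRC in
theorem right_cancel (a b c : StructureMonoid op) (h : b * a = c * a) : b = c := by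
  have h1 : psiM op hlb hRC b * psiM op hlb hRC a = psiM op hlb hRC c * psiM op hlb hRC a := by
    rw [← map_mul, ← map_mul, h]
  have h2 := mul_right_cancel h1
  exact nuM_inj op hlb hRC (by rw [nuM, nuM, h2])

include hlb hRC in
theorem common_right_multiple (f g : StructureMonoid op) :
    ∃ h, f ∣ h ∧ g ∣ h ∧ ∀ h', f ∣ h' → g ∣ h' → h ∣ h' := by
  have hnn : ∀ x, 0 ≤ (nuM op hlb hRC f ⊔ nuM op hlb hRC g) x := by
    intro x
    have h1 := nuM_nonneg op hlb hRC f x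
    have h2 : nuM op hlb hRC f ≤ nuM op hlb hRC f ⊔ nuM op hlb hRC g := le_sup_left
    exact le_trans h1 (Finsupp.le_def.mp h2 x)
  obtain ⟨m, hm⟩ := nuM_surj op hlb hRC _ hnn
  refine ⟨m, ?_, ?_, ?_⟩
  · rw [dvd_iff_le op hlb hRC, hm]; exact le_sup_left
  · rw [dvd_iff_le op hlb hRC, hm]; exact le_sup_right
  · intro h' h1 h2
    rw [dvd_iff_le op hlb hRC, hm]
    rw [dvd_iff_le op hlb hRC] at h1 h2
    exact sup_le h1 h2

include hlb hRC in
theorem eq_one_of_mul_eq_one {m m' : StructureMonoid op} (h : m * m' = 1) : m = 1 := by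
  refine nuM_inj op hlb hRC ?_
  rw [nuM_one]
  have h1 : nuM op hlb hRC (m * m') = 0 := by rw [h, nuM_one]
  rw [nuM_mul] at h1
  ext x
  have h2 := congrFun (congrArg (fun v : S →₀ ℤ => (v : S → ℤ)) h1) x
  simp only [Finsupp.add_apply, Finsupp.coe_zero, Pi.zero_apply] at h2 ⊢
  have h3 : 0 ≤ equivMapDomain (psiM op hlb hRC m).perm.symm (nuM op hlb hRC m') x := by
    rw [equivMapDomain_apply]; exact nuM_nonneg op hlb hRC m' _
  have h4 := nuM_nonneg op hlb hRC m x
  omega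

end MonoidLevel

section LeftMultiples

variable (op : S → S → S)
  (hbij : Function.Bijective (fun p : S × S => (op p.1 p.2, op p.2 p.1)))

include hbij in
theorem pair_surj (s t : S) (hst : s ≠ t) :
    ∃ x y : S, x ≠ y ∧ op x y = s ∧ op y x = t := by
  obtain ⟨⟨x, y⟩, hxy⟩ := hbij.surjective (s, t)
  simp only [Prod.mk.injEq] at hxy
  refine ⟨x, y, ?_, hxy.1, hxy.2⟩
  rintro rfl
  exact hst (hxy.1 ▸ hxy.2 ▸ rfl)

include hbij in
theorem gen_left_mult (s t : S) (hst : s ≠ t) :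
    ∃ x y : S, smGen op x * smGen op s = smGen op y * smGen op t := by
  obtain ⟨x, y, hxy, hx, hy⟩ := pair_surj op hbij s t hst
  refine ⟨x, y, ?_⟩
  have h : conGen (rcRel op) (FreeMonoid.of x * FreeMonoid.of (op x y))
      (FreeMonoid.of y * FreeMonoid.of (op y x)) :=
    ConGen.Rel.of _ _ ⟨x, y, hxy, rfl, rfl⟩
  rw [hx, hy] at h
  show (conGen (rcRel op)).mk' _ * (conGen (rcRel op)).mk' _
      = (conGen (rcRel op)).mk' _ * (conGen (rcRel op)).mk' _
  rw [← map_mul, ← map_mul]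
  exact (Con.eq _).mpr h

include hbij in
theorem gen_left_mult_word :
    ∀ l : List S, ∀ t : S, ∃ u w : StructureMonoid op,
      u * (conGen (rcRel op)).mk' (ofList l) = w * smGen op t := by
  intro l
  induction l using List.reverseRecOn with
  | nil =>
    intro t
    refine ⟨smGen op t, 1, ?_⟩
    rw [ofList_nil, map_one, mul_one, one_mul]
  | append_singleton l s ih =>
    intro t
    have hsplit : (conGen (rcRel op)).mk' (ofList (l ++ [s]))
        = (conGen (rcRel op)).mk' (ofList l) * smGen op s := by
      rw [ofList_append, map_mul]
      rfl
    by_cases hst : s = t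
    · subst hst
      exact ⟨1, (conGen (rcRel op)).mk' (ofList l), by rw [hsplit, one_mul]⟩
    · obtain ⟨x, y, key⟩ := gen_left_mult op hbij s t hst
      obtain ⟨u', w', h'⟩ := ih x
      refine ⟨u', w' * smGen op y, ?_⟩
      rw [hsplit, ← mul_assoc, h', mul_assoc, key, ← mul_assoc, mul_assoc]

include hbij in
theorem gen_left_mult_elem (f : StructureMonoid op) (t : S) :
    ∃ u w : StructureMonoid op, u * f = w * smGen op t := by
  obtain ⟨l, rfl⟩ := exists_rep op f
  exact gen_left_mult_word op hbij l t

include hbij in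
theorem common_left_multiple :
    ∀ f g : StructureMonoid op, ∃ x y : StructureMonoid op, x * f = y * g := by
  have main : ∀ l : List S, ∀ f : StructureMonoid op,
      ∃ x y : StructureMonoid op, x * f = y * (conGen (rcRel op)).mk' (ofList l) := by
    intro l
    induction l using List.reverseRecOn with
    | nil =>
      intro f
      refine ⟨1, f, ?_⟩
      rw [ofList_nil, map_one, mul_one, one_mul]
    | append_singleton l t ih =>
      intro f
      obtain ⟨u, w, hu⟩ := gen_left_mult_elem op hbij f t
      obtain ⟨p, q, hp⟩ := ih w
      refine ⟨p * u, q, ?_⟩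
      have hsplit : (conGen (rcRel op)).mk' (ofList (l ++ [t]))
          = (conGen (rcRel op)).mk' (ofList l) * smGen op t := by
        rw [ofList_append, map_mul]
        rfl
      rw [hsplit, mul_assoc, hu, ← mul_assoc, hp, mul_assoc]
  intro f g
  obtain ⟨l, rfl⟩ := exists_rep op g
  exact main l f

end LeftMultiples

section GroupLevel

variable (op : S → S → S) (hlb : ∀ s : S, Function.Bijective (op s)) (hRC : RCLaw op)

theorem pg_rel (s t : S) (hst : s ≠ t) :
    (PresentedGroup.of s : StructureGroup op) * PresentedGroup.of (op s t)
      = PresentedGroup.of t * PresentedGroup.of (op t s) := by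
  have hmem : FreeGroup.of s * FreeGroup.of (op s t)
      * (FreeGroup.of t * FreeGroup.of (op t s))⁻¹ ∈ rcRelsG op := ⟨s, t, hst, rfl⟩
  have h1 : PresentedGroup.mk (rcRelsG op)
      (FreeGroup.of s * FreeGroup.of (op s t)
        * (FreeGroup.of t * FreeGroup.of (op t s))⁻¹) = 1 :=
    (QuotientGroup.eq_one_iff _).mpr (Subgroup.subset_normalClosure hmem)
  rw [map_mul, map_inv, map_mul, map_mul] at h1
  exact mul_inv_eq_one.mp h1

/-- The canonical homomorphism from the structure monoid to the structure group. -/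
noncomputable def phi : StructureMonoid op →* StructureGroup op := by
  refine (conGen (rcRel op)).lift
    (FreeMonoid.lift fun s => (PresentedGroup.of s : StructureGroup op)) (Con.conGen_le.mpr ?_)
  rintro a b ⟨s, t, hst, rfl, rfl⟩
  show FreeMonoid.lift _ _ = FreeMonoid.lift _ _
  rw [map_mul, map_mul, FreeMonoid.lift_eval_of, FreeMonoid.lift_eval_of,
    FreeMonoid.lift_eval_of, FreeMonoid.lift_eval_of]
  exact pg_rel op s t hst

theorem phi_gen (s : S) : phi op (smGen op s) = PresentedGroup.of s := by
  rw [smGen, phi, Con.lift_mk']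
  rfl

/-- The evaluation homomorphism on the structure group. -/
noncomputable def PsiG : StructureGroup op →* K S := by
  refine PresentedGroup.toGroup (f := kg op hlb) ?_
  rintro r ⟨s, t, hst, rfl⟩
  rw [map_mul, map_inv, map_mul, map_mul, FreeGroup.lift_apply_of, FreeGroup.lift_apply_of,
    FreeGroup.lift_apply_of, FreeGroup.lift_apply_of]
  exact mul_inv_eq_one.mpr (kg_rel op hlb hRC s t)

theorem PsiG_phi (m : StructureMonoid op) :
    PsiG op hlb hRC (phi op m) = psiM op hlb hRC m := by
  obtain ⟨l, rfl⟩ := exists_rep op m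
  rw [psiM_mk, phi, Con.lift_mk']
  induction l with
  | nil =>
    rw [ofList_nil, map_one, map_one, map_one]
  | cons s l ih =>
    rw [ofList_cons, map_mul, map_mul, map_mul, ih, FreeMonoid.lift_eval_of, psi0_of]
    congr 1
    exact PresentedGroup.toGroup.of _

include hlb hRC in
theorem phi_inj : Function.Injective (phi op) := by
  intro a b h
  have h1 : psiM op hlb hRC a = psiM op hlb hRC b := by
    rw [← PsiG_phi op hlb hRC, ← PsiG_phi op hlb hRC, h]
  exact nuM_inj op hlb hRC (by rw [nuM, nuM, h1])

end GroupLevel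

section Torsion

variable {M G : Type*} [Monoid M] [Group G]

/-- Abstract torsion-freeness: a group of left fractions of a monoid with
right lcm's, cancellativity and an injective embedding is torsion-free. -/
theorem torsion_free_aux (φ : M →* G)
    (hinj : Function.Injective φ)
    (hone : ∀ m m' : M, m * m' = 1 → m = 1)
    (hcan : ∀ a b c : M, a * b = a * c → b = c)
    (hlcm : ∀ f g : M, ∃ m, f ∣ m ∧ g ∣ m ∧ ∀ h, f ∣ h → g ∣ h → m ∣ h)
    (hfrac : ∀ x : G, ∃ f g : M, x = (φ f)⁻¹ * φ g)
    (x : G) (k : ℕ) (hk : k ≠ 0) (hxk : x ^ k = 1) : x = 1 := by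
  -- the left-invariant divisibility order on `G`
  set r : G → G → Prop := fun u v => ∃ m : M, v = u * φ m with hr
  have r_refl : ∀ u, r u u := fun u => ⟨1, by simp⟩
  have r_trans : ∀ {u v w}, r u v → r v w → r u w := by
    rintro u v w ⟨m, rfl⟩ ⟨m', rfl⟩
    exact ⟨m * m', by rw [map_mul, mul_assoc]⟩
  have r_antisymm : ∀ {u v}, r u v → r v u → u = v := by
    rintro u v ⟨m, rfl⟩ ⟨m', hm'⟩
    rw [mul_assoc, ← map_mul] at hm'
    have h1 : φ (m * m') = 1 := (left_eq_mul.mp hm').symm ▸ rfl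
    have h2 : φ (m * m') = 1 := left_eq_mul.mp hm'
    have h3 : m * m' = 1 := hinj (by rw [h2, map_one])
    have h4 : m = 1 := hone m m' h3
    rw [h4, map_one, mul_one]
  have r_left : ∀ (a : G) {u v}, r u v → r (a * u) (a * v) := by
    rintro a u v ⟨m, rfl⟩
    exact ⟨m, by rw [mul_assoc]⟩
  have r_left_rev : ∀ (a : G) {u v}, r (a * u) (a * v) → r u v := by
    rintro a u v ⟨m, hm⟩
    rw [mul_assoc] at hm
    exact ⟨m, mul_left_cancel hm⟩
  -- least upper bound of `1` and an arbitrary element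
  have sup1 : ∀ z : G, ∃ s, r 1 s ∧ r z s ∧ ∀ w, r 1 w → r z w → r s w := by
    intro z
    obtain ⟨f, g, rfl⟩ := hfrac z
    obtain ⟨m, ⟨cf, rfl⟩, ⟨cg, hcg⟩, hleast⟩ := hlcm f g
    refine ⟨(φ f)⁻¹ * φ (f * cf), ⟨cf, ?_⟩, ⟨cg, ?_⟩, ?_⟩
    · rw [one_mul, map_mul, inv_mul_cancel_left]
    · rw [mul_assoc, ← map_mul, ← hcg]
    · rintro w ⟨a, hw1⟩ ⟨b, hw2⟩
      rw [one_mul] at hw1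
      subst hw1
      have hfg : φ (f * a) = φ (g * b) := by
        rw [map_mul, map_mul, hw2]
        group
      have hfa : f * a = g * b := hinj hfg
      have hdvd : f * cf ∣ f * a :=
        hleast (f * a) ⟨a, rfl⟩ ⟨b, hfa⟩
      obtain ⟨d, hd⟩ := hdvd
      refine ⟨d, ?_⟩
      rw [mul_assoc] at hd
      have had : a = cf * d := hcan f a (cf * d) hd
      rw [map_mul, inv_mul_cancel_left, ← map_mul, ← had]
  -- binary least upper bounds
  have sup_pair : ∀ a b : G, ∃ s, r a s ∧ r b s ∧ ∀ w, r a w → r b w → r s w := by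
    intro a b
    obtain ⟨s₀, h1, h2, h3⟩ := sup1 (a⁻¹ * b)
    refine ⟨a * s₀, ?_, ?_, ?_⟩
    · have := r_left a h1
      rwa [mul_one] at this
    · have := r_left a h2
      rwa [mul_inv_cancel_left] at this
    · intro w hwa hwb
      have hwa' : r 1 (a⁻¹ * w) := by
        refine r_left_rev a ?_
        rwa [mul_one, mul_inv_cancel_left]
      have hwb' : r (a⁻¹ * b) (a⁻¹ * w) := by
        refine r_left_rev a ?_
        rwa [mul_inv_cancel_left, mul_inv_cancel_left]
      have := r_left a (h3 _ hwa' hwb')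
      rwa [mul_inv_cancel_left] at this
  -- least upper bounds of finite families
  have supfam : ∀ n : ℕ, 0 < n → ∀ F : ℕ → G,
      ∃ z, (∀ i < n, r (F i) z) ∧ ∀ w, (∀ i < n, r (F i) w) → r z w := by
    intro n
    induction n with
    | zero => omega
    | succ n ih =>
      intro _ F
      rcases Nat.eq_zero_or_pos n with rfl | hn
      · refine ⟨F 0, fun i hi => ?_, fun w hw => hw 0 (by omega)⟩
        have : i = 0 := by omega
        subst this
        exact r_refl _
      · obtain ⟨z', hz1, hz2⟩ := ih hn F
        obtain ⟨z, h1, h2, h3⟩ := sup_pair z' (F n)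
        refine ⟨z, ?_, ?_⟩
        · intro i hi
          rcases Nat.lt_succ_iff_lt_or_eq.mp hi with h | rfl
          · exact r_trans (hz1 i h) h1
          · exact h2
        · intro w hw
          exact h3 w (hz2 w fun i hi => hw i (Nat.lt_succ_of_lt hi)) (hw n (Nat.lt_succ_self n))
  -- the sup of the powers of x is invariant under multiplication by x
  obtain ⟨z, hub, hleast⟩ := supfam k (Nat.pos_of_ne_zero hk) fun i => x ^ i
  have hub' : ∀ i < k, r (x ^ i) (x * z) := by
    intro i hi
    cases i with
    | zero =>
      have h := r_left x (hub (k - 1) (by omega))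
      have hxx : x * x ^ (k - 1) = x ^ 0 := by
        rw [← pow_succ']
        have : k - 1 + 1 = k := by omega
        rw [this, hxk, pow_zero]
      rwa [hxx] at h
    | succ j =>
      have h := r_left x (hub j (by omega))
      rwa [← pow_succ'] at h
  have hleast' : ∀ w, (∀ i < k, r (x ^ i) w) → r (x * z) w := by
    intro w hw
    have hw' : ∀ i < k, r (x ^ i) (x⁻¹ * w) := by
      intro i hi
      rcases eq_or_lt_of_le (Nat.succ_le_of_lt hi) with heq | hlt
      · -- i + 1 = k : then x ^ i = x⁻¹
        have hxi : x ^ i = x⁻¹ := by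
          have heq' : i + 1 = k := heq
          have : x * x ^ i = 1 := by rw [← pow_succ', heq', hxk]
          exact ((inv_eq_of_mul_eq_one_right this)).symm
        have h := r_left x⁻¹ (hw 0 (Nat.pos_of_ne_zero hk))
        rw [pow_zero, mul_one] at h
        rwa [hxi]
      · have h := r_left x⁻¹ (hw (i + 1) hlt)
        rwa [pow_succ', inv_mul_cancel_left] at h
    have h := r_left x (hleast _ hw')
    rwa [mul_inv_cancel_left] at h
  have h1 : r z (x * z) := hleast _ hub'
  have h2 : r (x * z) z := hleast' z hub
  have h3 : x * z = z := r_antisymm h2 h1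
  exact right_eq_mul.mp h3.symm

end Torsion

end Stmt8

/-- For a bijective RC-quasigroup `(S,∘)` with structure monoid `M` and
structure group `G`: `M` is left- and right-cancellative, any two elements of `M` admit a
common right-multiple and a common left-multiple, the canonical homomorphism `M → G` is
injective, every element of `G` is a left fraction and a right fraction of elements of the
image of `M`, and `G` is torsion-free. -/
theorem statement8 {S : Type*} (op : S → S → S)
    (hRC : RCLaw op) (hlb : ∀ s : S, Function.Bijective (op s))
    (hbij : Function.Bijective (fun p : S × S => (op p.1 p.2, op p.2 p.1))) :
    (∀ a b c : StructureMonoid op, a * b = a * c → b = c) ∧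
    (∀ a b c : StructureMonoid op, b * a = c * a → b = c) ∧
    (∀ f g : StructureMonoid op, ∃ h, f ∣ h ∧ g ∣ h) ∧
    (∀ f g : StructureMonoid op, ∃ h f' g', h = f' * f ∧ h = g' * g) ∧
    (∃ φ : StructureMonoid op →* StructureGroup op,
      (∀ s : S, φ (smGen op s) = PresentedGroup.of s) ∧
      Function.Injective φ ∧
      (∀ x : StructureGroup op, ∃ f g : StructureMonoid op, x = (φ f)⁻¹ * φ g) ∧
      (∀ x : StructureGroup op, ∃ f g : StructureMonoid op, x = φ g * (φ f)⁻¹)) ∧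
    (∀ x : StructureGroup op, ∀ k : ℕ, k ≠ 0 → x ^ k = 1 → x = 1) := by
  classical
  -- left fractions
  have key2L : ∀ p q g f' : StructureMonoid op, p * g = q * f' →
      Stmt8.phi op g * (Stmt8.phi op f')⁻¹ = (Stmt8.phi op p)⁻¹ * Stmt8.phi op q := by
    intro p q g f' h
    have hthis : Stmt8.phi op p * Stmt8.phi op g = Stmt8.phi op q * Stmt8.phi op f' := by
      rw [← map_mul, ← map_mul, h]
    rw [eq_inv_mul_iff_mul_eq, ← mul_assoc, hthis, mul_assoc, mul_inv_cancel, mul_one]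
  let Hl : Subgroup (StructureGroup op) :=
    { carrier := {x | ∃ f g : StructureMonoid op, x = (Stmt8.phi op f)⁻¹ * Stmt8.phi op g}
      one_mem' := ⟨1, 1, by simp⟩
      inv_mem' := by
        rintro x ⟨f, g, rfl⟩
        exact ⟨g, f, by rw [mul_inv_rev, inv_inv]⟩
      mul_mem' := by
        rintro x y ⟨f, g, rfl⟩ ⟨f', g', rfl⟩
        obtain ⟨p, q, hpq⟩ := Stmt8.common_left_multiple op hbij g f'
        refine ⟨p * f, q * g', ?_⟩
        have k2 := key2L p q g f' hpq
        calc ((Stmt8.phi op f)⁻¹ * Stmt8.phi op g)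
              * ((Stmt8.phi op f')⁻¹ * Stmt8.phi op g')
            = (Stmt8.phi op f)⁻¹
              * ((Stmt8.phi op g * (Stmt8.phi op f')⁻¹) * Stmt8.phi op g') := by group
          _ = (Stmt8.phi op f)⁻¹
              * (((Stmt8.phi op p)⁻¹ * Stmt8.phi op q) * Stmt8.phi op g') := by rw [k2]
          _ = (Stmt8.phi op (p * f))⁻¹ * Stmt8.phi op (q * g') := by
              rw [map_mul, map_mul, mul_inv_rev]; group }
  have hfracL : ∀ x : StructureGroup op,
      ∃ f g : StructureMonoid op, x = (Stmt8.phi op f)⁻¹ * Stmt8.phi op g := by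
    intro x
    have hx : x ∈ Hl := by
      refine PresentedGroup.generated_by (rcRelsG op) Hl (fun j => ?_) x
      exact ⟨1, smGen op j, by rw [map_one, inv_one, one_mul, Stmt8.phi_gen]⟩
    exact hx
  -- right fractions
  have key2R : ∀ f g' u v : StructureMonoid op, f * u = g' * v →
      (Stmt8.phi op f)⁻¹ * Stmt8.phi op g' = Stmt8.phi op u * (Stmt8.phi op v)⁻¹ := by
    intro f g' u v h
    rw [inv_mul_eq_iff_eq_mul, ← mul_assoc, ← map_mul, h, map_mul, mul_assoc,
      mul_inv_cancel, mul_one]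
  let Hr : Subgroup (StructureGroup op) :=
    { carrier := {x | ∃ f g : StructureMonoid op, x = Stmt8.phi op g * (Stmt8.phi op f)⁻¹}
      one_mem' := ⟨1, 1, by simp⟩
      inv_mem' := by
        rintro x ⟨f, g, rfl⟩
        exact ⟨g, f, by rw [mul_inv_rev, inv_inv]⟩
      mul_mem' := by
        rintro x y ⟨f, g, rfl⟩ ⟨f', g', rfl⟩
        obtain ⟨h₀, ⟨u, rfl⟩, ⟨v, hv⟩, -⟩ := Stmt8.common_right_multiple op hlb hRC f g'
        have k2 := key2R f g' u v hv
        refine ⟨f' * v, g * u, ?_⟩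
        calc (Stmt8.phi op g * (Stmt8.phi op f)⁻¹)
              * (Stmt8.phi op g' * (Stmt8.phi op f')⁻¹)
            = Stmt8.phi op g
              * (((Stmt8.phi op f)⁻¹ * Stmt8.phi op g') * (Stmt8.phi op f')⁻¹) := by group
          _ = Stmt8.phi op g
              * ((Stmt8.phi op u * (Stmt8.phi op v)⁻¹) * (Stmt8.phi op f')⁻¹) := by rw [k2]
          _ = Stmt8.phi op (g * u) * (Stmt8.phi op (f' * v))⁻¹ := by
              rw [map_mul, map_mul, mul_inv_rev]; group }
  have hfracR : ∀ x : StructureGroup op,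
      ∃ f g : StructureMonoid op, x = Stmt8.phi op g * (Stmt8.phi op f)⁻¹ := by
    intro x
    have hx : x ∈ Hr := by
      refine PresentedGroup.generated_by (rcRelsG op) Hr (fun j => ?_) x
      exact ⟨1, smGen op j, by rw [map_one, inv_one, mul_one, Stmt8.phi_gen]⟩
    exact hx
  refine ⟨Stmt8.left_cancel op hlb hRC, Stmt8.right_cancel op hlb hRC, ?_, ?_, ?_, ?_⟩
  · intro f g
    obtain ⟨h, h1, h2, -⟩ := Stmt8.common_right_multiple op hlb hRC f g
    exact ⟨h, h1, h2⟩
  · intro f g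
    obtain ⟨x, y, hxy⟩ := Stmt8.common_left_multiple op hbij f g
    exact ⟨x * f, x, y, rfl, hxy⟩
  · exact ⟨Stmt8.phi op, Stmt8.phi_gen op, Stmt8.phi_inj op hlb hRC, hfracL, hfracR⟩
  · intro x k hk hxk
    refine Stmt8.torsion_free_aux (Stmt8.phi op) (Stmt8.phi_inj op hlb hRC)
      (fun m m' h => Stmt8.eq_one_of_mul_eq_one op hlb hRC h)
      (Stmt8.left_cancel op hlb hRC) ?_ hfracL x k hk hxk
    intro f g
    obtain ⟨m, h1, h2, h3⟩ := Stmt8.common_right_multiple op hlb hRC f g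
    exact ⟨m, h1, h2, h3⟩
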